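/- Let G be a finite simple graph, s ≥ 1 an integer, and C an s-plex of G. If C contains two vertices u and v with dist_{G[C]}(u,v) ≥ 3, then |C| ≤ 2s − 2. Equivalently, every s-plex with at least 2s − 1 vertices has diameter at most 2. -/
import Mathlib


/-- `C` is an `s`-plex in `G`: the induced subgraph `G[C]` is connected and every
vertex `v ∈ C` is nonadjacent to at most `s - 1` vertices of `C \ {v}`. -/
def IsSPlex {V : Type*} (G : SimpleGraph V) (s : ℕ) (C : Set V) : Prop :=
  (G.induce C).Connected ∧
  ∀ v : C, {u : C | u ≠ v ∧ ¬ G.Adj (v : V) (u : V)}.ncard ≤ s - 1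

theorem stmt_12 {V : Type*} [Fintype V] (G : SimpleGraph V) (s : ℕ) (hs : 1 ≤ s)
    (C : Set V) (hC : IsSPlex G s C)
    (u v : C) (hdist : 3 ≤ (G.induce C).edist u v) :
    C.ncard ≤ 2 * s - 2 := by
  classical
  obtain ⟨hconn, hplex⟩ := hC
  set A : Set C := {w : C | w ≠ u ∧ ¬ G.Adj (u : V) (w : V)} with hAdef
  set B : Set C := {w : C | w ≠ v ∧ ¬ G.Adj (v : V) (w : V)} with hBdef
  have hA : A.ncard ≤ s - 1 := hplex u
  have hB : B.ncard ≤ s - 1 := hplex v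
  have hne : u ≠ v := by
    intro h
    rw [h, SimpleGraph.edist_self] at hdist
    simp at hdist
  have hnadj : ¬ (G.induce C).Adj u v := by
    intro h
    have := SimpleGraph.edist_le h.toWalk
    have h2 : (3 : ℕ∞) ≤ 1 := le_trans hdist (by simpa using this)
    norm_num at h2
  have hnadj' : ¬ (G.induce C).Adj u v := hnadj
  have hcov : (Set.univ : Set C) ⊆ A ∪ B := by
    intro w _
    by_cases hwu : w = u
    · right
      refine ⟨hwu ▸ hne, fun h => ?_⟩
      exact hnadj (show (G.induce C).Adj u v from hwu ▸ h.symm)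
    · by_cases hwv : w = v
      · left
        refine ⟨hwv ▸ (fun h => hne h.symm), fun h => ?_⟩
        exact hnadj (show (G.induce C).Adj u v from hwv ▸ h)
      · by_cases h1 : G.Adj (u : V) (w : V)
        · right
          refine ⟨hwv, fun h2 => ?_⟩
          have a1 : (G.induce C).Adj u w := h1
          have a2 : (G.induce C).Adj w v := (h2 : (G.induce C).Adj v w).symm
          have hwalk := SimpleGraph.edist_le (a1.toWalk.append a2.toWalk)
          simp [SimpleGraph.Walk.length_append] at hwalk
          have : (3 : ℕ∞) ≤ 2 := le_trans hdist hwalk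
          norm_num at this
        · left
          exact ⟨hwu, h1⟩
  have hfin : (Set.univ : Set C).Finite := Set.toFinite _
  have h1 : (Set.univ : Set C).ncard ≤ A.ncard + B.ncard := by
    calc (Set.univ : Set C).ncard ≤ (A ∪ B).ncard :=
          Set.ncard_le_ncard hcov (Set.toFinite _)
      _ ≤ A.ncard + B.ncard := Set.ncard_union_le _ _
  have hCeq : C.ncard = (Set.univ : Set C).ncard := by
    rw [Set.ncard_univ, Nat.card_coe_set_eq]
  omega
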